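/- Let K : ℝ → ℝ be an even function such that K(t) = a₀ + a₂·t² + c·|t|^α + o(|t|²) as t → 0, where a₀, a₂, c ∈ ℝ and α > 2, and let λ > 0. For each n ≥ 1 let s_i = i/n for 0 ≤ i ≤ n, let ρ = exp(−λ/n), and let Σ be the (n+1)×(n+1) real matrix with entries Σ_{ij} = ρ^{|i−j|} = exp(−λ|s_i − s_j|); Σ is positive definite, hence invertible. Then Σ_{i=0}^n Σ_{j=0}^n (Σ^{−1})_{ij} · K(|s_i − s_j|) converges to a₀·(1 + λ/2) − a₂/λ as n → ∞. -/

import Mathlib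

open Filter Asymptotics
open scoped Topology

noncomputable section

/-- The exponential working covariance matrix over the grid `s_i = i/n`, `0 ≤ i ≤ n`:
`Σ_{ij} = exp(−λ |s_i − s_j|)`. -/
def expCovMatrix (n : ℕ) (lam : ℝ) : Matrix (Fin (n + 1)) (Fin (n + 1)) ℝ :=
  Matrix.of fun i j => Real.exp (-lam * |((i : ℕ) : ℝ) / n - ((j : ℕ) : ℝ) / n|)

open Finset

set_option linter.unnecessarySeqFocus false
set_option linter.unusedTactic false

def tEnt (n : ℕ) (ρ : ℝ) (i j : ℕ) : ℝ :=
  (if i = j then (if i = 0 ∨ i = n then 1 else 1 + ρ^2)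
   else if Nat.dist i j = 1 then -ρ else 0) / (1 - ρ^2)

lemma tEnt_eq_zero {n : ℕ} {ρ : ℝ} {i j : ℕ} (h : 2 ≤ Nat.dist i j) : tEnt n ρ i j = 0 := by
  have h1 : i ≠ j := by rintro rfl; simp [Nat.dist_self] at h
  have h2 : Nat.dist i j ≠ 1 := by omega
  simp [tEnt, h1, h2]

lemma natDist_def (a b : ℕ) : Nat.dist a b = a - b + (b - a) := rfl

lemma key_sum (n : ℕ) (hn : 1 ≤ n) (ρ : ℝ) (hρ : 1 - ρ^2 ≠ 0)
    (i k : ℕ) (hi : i ≤ n) (hk : k ≤ n) :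
    ∑ j ∈ Finset.range (n+1), tEnt n ρ i j * ρ ^ Nat.dist j k
      = if i = k then 1 else 0 := by
  set f : ℕ → ℝ := fun j => tEnt n ρ i j * ρ ^ Nat.dist j k with hf
  rcases Nat.eq_zero_or_pos i with hi0 | hi1
  · subst hi0
    have hsub : ({0, 1} : Finset ℕ) ⊆ Finset.range (n+1) := by
      intro x hx; simp only [mem_insert, mem_singleton] at hx
      rcases hx with rfl | rfl <;> simp [Finset.mem_range] <;> omega
    rw [← Finset.sum_subset hsub (fun x hx hxne => ?_)]
    · rw [Finset.sum_pair (by norm_num : (0:ℕ) ≠ 1)]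
      have e0 : tEnt n ρ 0 0 = 1 / (1 - ρ^2) := by simp [tEnt]
      have e1 : tEnt n ρ 0 1 = -ρ / (1 - ρ^2) := by
        have : Nat.dist 0 1 = 1 := by simp [natDist_def]
        simp [tEnt, this]
      rcases Nat.eq_zero_or_pos k with hk0 | hk1
      · subst hk0
        have d0 : Nat.dist 0 0 = 0 := by simp [natDist_def]
        have d1 : Nat.dist 1 0 = 1 := by simp [natDist_def]
        simp only [hf, e0, e1, d0, d1, pow_zero, pow_one, if_pos rfl]
        field_simp
        simp only [eq_self_iff_true, if_true]
        ring
      · obtain ⟨m, rfl⟩ : ∃ m, k = m + 1 := ⟨k - 1, by omega⟩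
        have d0 : Nat.dist 0 (m+1) = m + 1 := by simp [natDist_def]
        have d1 : Nat.dist 1 (m+1) = m := by simp [natDist_def]
        have hne : (0 : ℕ) ≠ m + 1 := by omega
        simp only [hf, e0, e1, d0, d1, if_neg hne]
        field_simp
        ring
    · simp only [mem_insert, mem_singleton] at hxne
      have : 2 ≤ Nat.dist 0 x := by simp [natDist_def]; omega
      simp [hf, tEnt_eq_zero this]
  · rcases eq_or_lt_of_le hi with hiN | hiN
    · subst hiN
      have hsub : ({i - 1, i} : Finset ℕ) ⊆ Finset.range (i+1) := by
        intro x hx; simp only [mem_insert, mem_singleton] at hx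
        rcases hx with rfl | rfl <;> simp [Finset.mem_range] <;> omega
      rw [← Finset.sum_subset hsub (fun x hx hxne => ?_)]
      · rw [Finset.sum_pair (by omega : i - 1 ≠ i)]
        have e0 : tEnt i ρ i (i-1) = -ρ / (1 - ρ^2) := by
          have h1 : i ≠ i - 1 := by omega
          have h2 : Nat.dist i (i-1) = 1 := by simp [natDist_def]; omega
          simp [tEnt, h1, h2]
        have e1 : tEnt i ρ i i = 1 / (1 - ρ^2) := by simp [tEnt]
        rcases eq_or_lt_of_le hk with hkN | hkN
        · subst hkN
          have d0 : Nat.dist (k-1) k = 1 := by simp [natDist_def]; omega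
          have d1 : Nat.dist k k = 0 := by simp [natDist_def]
          simp only [hf, e0, e1, d0, d1, pow_zero, pow_one, if_pos rfl]
          field_simp
          simp only [eq_self_iff_true, if_true]
          ring
        · obtain ⟨m, hm⟩ : ∃ m, i - k = m + 1 := ⟨i - k - 1, by omega⟩
          have d0 : Nat.dist (i-1) k = m := by simp [natDist_def]; omega
          have d1 : Nat.dist i k = m + 1 := by simp [natDist_def]; omega
          have hne : i ≠ k := by omega
          simp only [hf, e0, e1, d0, d1, if_neg hne]
          field_simp
          ring
      · simp only [mem_insert, mem_singleton] at hxne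
        have hxr : x < i + 1 := Finset.mem_range.mp hx
        have : 2 ≤ Nat.dist i x := by simp [natDist_def]; omega
        simp [hf, tEnt_eq_zero this]
    · -- interior : 1 ≤ i < n
      have hsub : ({i - 1, i, i + 1} : Finset ℕ) ⊆ Finset.range (n+1) := by
        intro x hx; simp only [mem_insert, mem_singleton] at hx
        rcases hx with rfl | rfl | rfl <;> simp [Finset.mem_range] <;> omega
      rw [← Finset.sum_subset hsub (fun x hx hxne => ?_)]
      · rw [Finset.sum_insert (by simp only [mem_insert, mem_singleton]; omega),
            Finset.sum_pair (by omega : i ≠ i + 1)]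
        have e0 : tEnt n ρ i (i-1) = -ρ / (1 - ρ^2) := by
          have h1 : i ≠ i - 1 := by omega
          have h2 : Nat.dist i (i-1) = 1 := by simp [natDist_def]; omega
          simp [tEnt, h1, h2]
        have e1 : tEnt n ρ i i = (1 + ρ^2) / (1 - ρ^2) := by
          have h1 : ¬ (i = 0 ∨ i = n) := by omega
          simp [tEnt, h1]
        have e2 : tEnt n ρ i (i+1) = -ρ / (1 - ρ^2) := by
          have h1 : i ≠ i + 1 := by omega
          have h2 : Nat.dist i (i+1) = 1 := by simp [natDist_def]
          simp [tEnt, h1, h2]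
        rcases lt_trichotomy k i with hki | hki | hki
        · obtain ⟨m, hm⟩ : ∃ m, i - k = m + 1 := ⟨i - k - 1, by omega⟩
          have d0 : Nat.dist (i-1) k = m := by simp [natDist_def]; omega
          have d1 : Nat.dist i k = m + 1 := by simp [natDist_def]; omega
          have d2 : Nat.dist (i+1) k = m + 2 := by simp [natDist_def]; omega
          have hne : i ≠ k := by omega
          simp only [hf, e0, e1, e2, d0, d1, d2, if_neg hne]
          field_simp
          ring
        · subst hki
          have d0 : Nat.dist (k-1) k = 1 := by simp [natDist_def]; omega
          have d1 : Nat.dist k k = 0 := by simp [natDist_def]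
          have d2 : Nat.dist (k+1) k = 1 := by simp [natDist_def]
          simp only [hf, e0, e1, e2, d0, d1, d2, pow_zero, pow_one, if_pos rfl]
          field_simp
          simp only [eq_self_iff_true, if_true]
          ring
        · obtain ⟨m, hm⟩ : ∃ m, k - i = m + 1 := ⟨k - i - 1, by omega⟩
          have d0 : Nat.dist (i-1) k = m + 2 := by simp [natDist_def]; omega
          have d1 : Nat.dist i k = m + 1 := by simp [natDist_def]; omega
          have d2 : Nat.dist (i+1) k = m := by simp [natDist_def]; omega
          have hne : i ≠ k := by omega
          simp only [hf, e0, e1, e2, d0, d1, d2, if_neg hne]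
          field_simp
          ring
      · simp only [mem_insert, mem_singleton] at hxne
        have : 2 ≤ Nat.dist i x := by simp [natDist_def]; omega
        simp [hf, tEnt_eq_zero this]

lemma row_sum (n : ℕ) (hn : 1 ≤ n) (ρ : ℝ) (g : ℕ → ℝ) (i : ℕ) (hi : i ≤ n) :
    ∑ j ∈ Finset.range (n+1), tEnt n ρ i j * g (Nat.dist i j)
      = if i = 0 ∨ i = n then (g 0 - ρ * g 1) / (1 - ρ^2)
        else ((1 + ρ^2) * g 0 - 2 * ρ * g 1) / (1 - ρ^2) := by
  rcases Nat.eq_zero_or_pos i with hi0 | hi1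
  · subst hi0
    have hsub : ({0, 1} : Finset ℕ) ⊆ Finset.range (n+1) := by
      intro x hx; simp only [mem_insert, mem_singleton] at hx
      rcases hx with rfl | rfl <;> simp [Finset.mem_range] <;> omega
    rw [← Finset.sum_subset hsub (fun x hx hxne => ?_)]
    · rw [Finset.sum_pair (by norm_num : (0:ℕ) ≠ 1)]
      have e0 : tEnt n ρ 0 0 = 1 / (1 - ρ^2) := by simp [tEnt]
      have e1 : tEnt n ρ 0 1 = -ρ / (1 - ρ^2) := by
        have : Nat.dist 0 1 = 1 := by simp [natDist_def]
        simp [tEnt, this]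
      have d0 : Nat.dist 0 0 = 0 := by simp [natDist_def]
      have d1 : Nat.dist 0 1 = 1 := by simp [natDist_def]
      rw [if_pos (show (0:ℕ) = 0 ∨ 0 = n from Or.inl rfl)]
      simp only [e0, e1, d0, d1]
      ring
    · simp only [mem_insert, mem_singleton] at hxne
      have : 2 ≤ Nat.dist 0 x := by simp [natDist_def]; omega
      simp [tEnt_eq_zero this]
  · rcases eq_or_lt_of_le hi with hiN | hiN
    · subst hiN
      have hsub : ({i - 1, i} : Finset ℕ) ⊆ Finset.range (i+1) := by
        intro x hx; simp only [mem_insert, mem_singleton] at hx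
        rcases hx with rfl | rfl <;> simp [Finset.mem_range] <;> omega
      rw [← Finset.sum_subset hsub (fun x hx hxne => ?_)]
      · rw [Finset.sum_pair (by omega : i - 1 ≠ i)]
        have e0 : tEnt i ρ i (i-1) = -ρ / (1 - ρ^2) := by
          have h1 : i ≠ i - 1 := by omega
          have h2 : Nat.dist i (i-1) = 1 := by simp [natDist_def]; omega
          simp [tEnt, h1, h2]
        have e1 : tEnt i ρ i i = 1 / (1 - ρ^2) := by simp [tEnt]
        have d0 : Nat.dist i (i-1) = 1 := by simp [natDist_def]; omega
        have d1 : Nat.dist i i = 0 := by simp [natDist_def]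
        rw [if_pos (show i = 0 ∨ i = i from Or.inr rfl)]
        simp only [e0, e1, d0, d1]
        ring
      · simp only [mem_insert, mem_singleton] at hxne
        have hxr : x < i + 1 := Finset.mem_range.mp hx
        have : 2 ≤ Nat.dist i x := by simp [natDist_def]; omega
        simp [tEnt_eq_zero this]
    · have hsub : ({i - 1, i, i + 1} : Finset ℕ) ⊆ Finset.range (n+1) := by
        intro x hx; simp only [mem_insert, mem_singleton] at hx
        rcases hx with rfl | rfl | rfl <;> simp [Finset.mem_range] <;> omega
      rw [← Finset.sum_subset hsub (fun x hx hxne => ?_)]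
      · rw [Finset.sum_insert (by simp only [mem_insert, mem_singleton]; omega),
            Finset.sum_pair (by omega : i ≠ i + 1)]
        have e0 : tEnt n ρ i (i-1) = -ρ / (1 - ρ^2) := by
          have h1 : i ≠ i - 1 := by omega
          have h2 : Nat.dist i (i-1) = 1 := by simp [natDist_def]; omega
          simp [tEnt, h1, h2]
        have e1 : tEnt n ρ i i = (1 + ρ^2) / (1 - ρ^2) := by
          have h1 : ¬ (i = 0 ∨ i = n) := by omega
          simp [tEnt, h1]
        have e2 : tEnt n ρ i (i+1) = -ρ / (1 - ρ^2) := by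
          have h1 : i ≠ i + 1 := by omega
          have h2 : Nat.dist i (i+1) = 1 := by simp [natDist_def]
          simp [tEnt, h1, h2]
        have d0 : Nat.dist i (i-1) = 1 := by simp [natDist_def]; omega
        have d1 : Nat.dist i i = 0 := by simp [natDist_def]
        have d2 : Nat.dist i (i+1) = 1 := by simp [natDist_def]
        have hcond : ¬ (i = 0 ∨ i = n) := by omega
        simp only [e0, e1, e2, d0, d1, d2, if_neg hcond]
        ring
      · simp only [mem_insert, mem_singleton] at hxne
        have : 2 ≤ Nat.dist i x := by simp [natDist_def]; omega
        simp [tEnt_eq_zero this]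

lemma total_sum (n : ℕ) (hn : 1 ≤ n) (A B : ℝ) :
    ∑ i ∈ Finset.range (n+1), (if i = 0 ∨ i = n then A else B)
      = 2 * A + ((n:ℝ) - 1) * B := by
  have hcongr : ∀ i ∈ Finset.range (n+1),
      (if i = 0 ∨ i = n then A else B)
        = B + ((if i = 0 then A - B else 0) + (if i = n then A - B else 0)) := by
    intro i hi
    rcases eq_or_ne i 0 with rfl | h0
    · have : ¬ (0 = n) := by omega
      simp [this]
    · rcases eq_or_ne i n with rfl | h1
      · simp [h0]
      · simp [h0, h1]
  rw [Finset.sum_congr rfl hcongr]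
  rw [Finset.sum_add_distrib, Finset.sum_add_distrib, Finset.sum_const,
      Finset.sum_ite_eq' (Finset.range (n+1)) 0 (fun _ => A - B),
      Finset.sum_ite_eq' (Finset.range (n+1)) n (fun _ => A - B)]
  simp only [Finset.mem_range, Finset.card_range]
  rw [if_pos (by omega), if_pos (by omega)]
  ring

lemma natDist_cast (i j : ℕ) : ((Nat.dist i j : ℕ) : ℝ) = |(i:ℝ) - (j:ℝ)| := by
  rcases le_total i j with h | h
  · have h' : (i:ℝ) ≤ j := Nat.cast_le.mpr h
    rw [Nat.dist_eq_sub_of_le h, Nat.cast_sub h, abs_of_nonpos (by linarith), neg_sub]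
  · have h' : (j:ℝ) ≤ i := Nat.cast_le.mpr h
    rw [Nat.dist_comm, Nat.dist_eq_sub_of_le h, Nat.cast_sub h, abs_of_nonneg (by linarith)]

lemma abs_grid (n i j : ℕ) (hn : 1 ≤ n) :
    |((i : ℕ) : ℝ) / n - ((j : ℕ) : ℝ) / n| = (Nat.dist i j : ℝ) / n := by
  have hn' : (0:ℝ) < n := by exact_mod_cast hn
  rw [div_sub_div_same, abs_div, natDist_cast, abs_of_pos hn']

lemma entry_eq (n : ℕ) (hn : 1 ≤ n) (lam : ℝ) (i j : Fin (n+1)) :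
    expCovMatrix n lam i j = Real.exp (-lam / n) ^ Nat.dist (i : ℕ) (j : ℕ) := by
  show Real.exp (-lam * |((i : ℕ) : ℝ) / n - ((j : ℕ) : ℝ) / n|) = _
  rw [abs_grid n i j hn,
    show -lam * ((Nat.dist (i:ℕ) (j:ℕ) : ℝ)/n) = (Nat.dist (i:ℕ) (j:ℕ) : ℝ) * (-lam/n) by ring,
    Real.exp_nat_mul]

lemma inv_eq (n : ℕ) (hn : 1 ≤ n) (lam : ℝ) (hlam : 0 < lam) :
    (expCovMatrix n lam)⁻¹
      = Matrix.of fun i j : Fin (n+1) => tEnt n (Real.exp (-lam / n)) (i : ℕ) (j : ℕ) := by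
  set ρ := Real.exp (-lam / n) with hρdef
  have hρpos : 0 < ρ := Real.exp_pos _
  have hρlt : ρ < 1 := by
    rw [hρdef, Real.exp_lt_one_iff]
    have hn' : (0:ℝ) < n := by exact_mod_cast hn
    exact div_neg_of_neg_of_pos (by linarith) hn'
  have hρ2 : ρ^2 < 1 := by nlinarith
  have hρne : 1 - ρ^2 ≠ 0 := ne_of_gt (by nlinarith)
  apply Matrix.inv_eq_left_inv
  ext i k
  rw [Matrix.mul_apply, Matrix.one_apply]
  have : ∀ j : Fin (n+1), (Matrix.of fun i j : Fin (n+1) => tEnt n ρ (i:ℕ) (j:ℕ)) i j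
      * expCovMatrix n lam j k = tEnt n ρ (i:ℕ) (j:ℕ) * ρ ^ Nat.dist (j:ℕ) (k:ℕ) := by
    intro j; rw [entry_eq n hn lam j k]; rfl
  rw [Finset.sum_congr rfl (fun j _ => this j),
      Fin.sum_univ_eq_sum_range (fun j => tEnt n ρ (i:ℕ) j * ρ ^ Nat.dist j (k:ℕ)) (n+1),
      key_sum n hn ρ hρne i k (Nat.lt_succ_iff.mp i.isLt) (Nat.lt_succ_iff.mp k.isLt)]
  simp [Fin.ext_iff]

lemma S_eq (n : ℕ) (hn : 1 ≤ n) (lam : ℝ) (hlam : 0 < lam) (K : ℝ → ℝ) :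
    (∑ i : Fin (n + 1), ∑ j : Fin (n + 1),
        (expCovMatrix n lam)⁻¹ i j * K (|((i : ℕ) : ℝ) / n - ((j : ℕ) : ℝ) / n|))
      = 2 * ((K 0 - Real.exp (-lam/n) * K (1/n)) / (1 - Real.exp (-lam/n)^2))
        + ((n:ℝ) - 1) * (((1 + Real.exp (-lam/n)^2) * K 0
            - 2 * Real.exp (-lam/n) * K (1/n)) / (1 - Real.exp (-lam/n)^2)) := by
  set ρ := Real.exp (-lam / n) with hρdef
  set g : ℕ → ℝ := fun d => K ((d : ℝ) / n) with hg
  have hg0 : g 0 = K 0 := by simp [hg]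
  have hg1 : g 1 = K (1/n) := by simp [hg]
  have hrow : ∀ i : Fin (n+1),
      (∑ j : Fin (n+1), (expCovMatrix n lam)⁻¹ i j * K (|((i : ℕ) : ℝ) / n - ((j : ℕ) : ℝ) / n|))
        = if (i:ℕ) = 0 ∨ (i:ℕ) = n then (g 0 - ρ * g 1) / (1 - ρ^2)
          else ((1 + ρ^2) * g 0 - 2 * ρ * g 1) / (1 - ρ^2) := by
    intro i
    have hterm : ∀ j : Fin (n+1),
        (expCovMatrix n lam)⁻¹ i j * K (|((i : ℕ) : ℝ) / n - ((j : ℕ) : ℝ) / n|)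
          = tEnt n ρ (i:ℕ) (j:ℕ) * g (Nat.dist (i:ℕ) (j:ℕ)) := by
      intro j
      rw [inv_eq n hn lam hlam, abs_grid n i j hn]
      rfl
    rw [Finset.sum_congr rfl (fun j _ => hterm j),
        Fin.sum_univ_eq_sum_range (fun j => tEnt n ρ (i:ℕ) j * g (Nat.dist (i:ℕ) j)) (n+1),
        row_sum n hn ρ g i (Nat.lt_succ_iff.mp i.isLt)]
  rw [Finset.sum_congr rfl (fun i _ => hrow i),
      Fin.sum_univ_eq_sum_range
        (fun i => if i = 0 ∨ i = n then (g 0 - ρ * g 1) / (1 - ρ^2)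
          else ((1 + ρ^2) * g 0 - 2 * ρ * g 1) / (1 - ρ^2)) (n+1),
      total_sum n hn, hg0, hg1]

lemma tendsto_n_one_sub_exp (c : ℝ) :
    Tendsto (fun n : ℕ => (n:ℝ) * (1 - Real.exp (-c / n))) atTop (𝓝 c) := by
  have hd : HasDerivAt (fun x : ℝ => 1 - Real.exp (-c * x)) c 0 := by
    have h1 : HasDerivAt (fun x : ℝ => -c * x) (-c) 0 := by
      simpa using (hasDerivAt_id (0:ℝ)).const_mul (-c)
    have h2 := h1.exp
    have h3 := h2.const_sub 1
    simpa using h3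
  have hs := hasDerivAt_iff_tendsto_slope.mp hd
  have ht : Tendsto (fun n : ℕ => (1:ℝ)/n) atTop (𝓝[≠] (0:ℝ)) := by
    apply tendsto_nhdsWithin_of_tendsto_nhds_of_eventually_within
    · exact tendsto_one_div_atTop_nhds_zero_nat
    · filter_upwards [eventually_ge_atTop 1] with n hn
      have hn' : (0:ℝ) < n := by exact_mod_cast hn
      simp only [Set.mem_compl_iff, Set.mem_singleton_iff]
      positivity
  have hcomp := hs.comp ht
  apply hcomp.congr'
  filter_upwards [eventually_ge_atTop 1] with n hn
  have hn' : (0:ℝ) < n := by exact_mod_cast hn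
  show slope (fun x : ℝ => 1 - Real.exp (-c * x)) 0 (1/n) = (n:ℝ) * (1 - Real.exp (-c / n))
  rw [slope_def_field]
  rw [show -c * (1/(n:ℝ)) = -c/n by ring]
  rw [show (-c : ℝ) * 0 = 0 by ring, Real.exp_zero]
  field_simp
  ring

lemma rpow_term_lim (c α : ℝ) (hα : 2 < α) :
    Tendsto (fun n : ℕ => (n:ℝ)^2 * (c * |1/(n:ℝ)|^α)) atTop (𝓝 0) := by
  have h1 : Tendsto (fun x : ℝ => x ^ (-(α-2) : ℝ)) atTop (𝓝 0) :=
    tendsto_rpow_neg_atTop (by linarith)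
  have h2 := (h1.comp tendsto_natCast_atTop_atTop (α := ℕ)).const_mul c
  rw [mul_zero] at h2
  apply h2.congr'
  filter_upwards [eventually_ge_atTop 1] with n hn
  have hn' : (0:ℝ) < n := by exact_mod_cast hn
  show c * ((n:ℝ) ^ (-(α-2):ℝ)) = (n:ℝ)^2 * (c * |1/(n:ℝ)|^α)
  rw [abs_of_pos (by positivity), one_div, Real.inv_rpow hn'.le, ← Real.rpow_neg hn'.le,
      show (-(α-2):ℝ) = ((2:ℕ):ℝ) + -α by push_cast; ring,
      Real.rpow_add hn', Real.rpow_natCast]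
  ring

lemma K_zero_eq (K : ℝ → ℝ) (a₀ a₂ c α : ℝ) (hα : 2 < α)
    (hK : (fun t : ℝ => K t - (a₀ + a₂ * t ^ 2 + c * |t| ^ α)) =o[𝓝 (0 : ℝ)]
      fun t : ℝ => t ^ 2) : K 0 = a₀ := by
  have h := (isLittleO_iff.mp hK one_pos).self_of_nhds
  rw [abs_zero, Real.zero_rpow (by linarith : α ≠ 0)] at h
  simp at h
  have : |K 0 - a₀| ≤ 0 := by simpa using h
  have := abs_nonpos_iff.mp this
  linarith [sub_eq_zero.mp this]

lemma W_lim (K : ℝ → ℝ) (a₀ a₂ c α : ℝ) (hα : 2 < α)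
    (hK : (fun t : ℝ => K t - (a₀ + a₂ * t ^ 2 + c * |t| ^ α)) =o[𝓝 (0 : ℝ)]
      fun t : ℝ => t ^ 2) :
    Tendsto (fun n : ℕ => (n:ℝ)^2 * (K (1/n) - a₀)) atTop (𝓝 a₂) := by
  set r : ℝ → ℝ := fun t => K t - (a₀ + a₂ * t ^ 2 + c * |t| ^ α) with hr
  have h1 : (fun n : ℕ => r (1/(n:ℝ))) =o[atTop] (fun n : ℕ => ((1:ℝ)/n)^2) :=
    hK.comp_tendsto tendsto_one_div_atTop_nhds_zero_nat
  have h2 := h1.tendsto_div_nhds_zero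
  have hrlim : Tendsto (fun n : ℕ => (n:ℝ)^2 * r (1/n)) atTop (𝓝 0) := by
    apply h2.congr'
    filter_upwards [eventually_ge_atTop 1] with n hn
    have hn' : (0:ℝ) < n := by exact_mod_cast hn
    show r (1/(n:ℝ)) / ((1:ℝ)/n)^2 = (n:ℝ)^2 * r (1/n)
    field_simp
  have hclim := rpow_term_lim c α hα
  have hsum : Tendsto (fun n : ℕ => a₂ + ((n:ℝ)^2 * (c * |1/(n:ℝ)|^α) + (n:ℝ)^2 * r (1/n)))
      atTop (𝓝 (a₂ + (0 + 0))) := tendsto_const_nhds.add (hclim.add hrlim)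
  rw [add_zero, add_zero] at hsum
  apply hsum.congr'
  filter_upwards [eventually_ge_atTop 1] with n hn
  have hn' : (0:ℝ) < n := by exact_mod_cast hn
  have hKval : K (1/(n:ℝ)) - a₀ = a₂ * (1/(n:ℝ))^2 + c * |1/(n:ℝ)|^α + r (1/n) := by
    rw [hr]; ring
  show a₂ + ((n:ℝ)^2 * (c * |1/(n:ℝ)|^α) + (n:ℝ)^2 * r (1/n)) = (n:ℝ)^2 * (K (1/n) - a₀)
  rw [hKval]
  field_simp
  ring

/-- Lemma S3 of the paper. Let `K` be even with
`K(t) = a₀ + a₂ t² + c |t|^α + o(t²)` as `t → 0`, `α > 2`, and let `Σ` be the exponential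
working covariance matrix with rate `λ > 0` on the grid `s_i = i/n`. Then
`Σ_{i,j} (Σ⁻¹)_{ij} K(|s_i − s_j|) → a₀ (1 + λ/2) − a₂/λ`. -/
theorem gls_quadratic_form_mean_limit
    (K : ℝ → ℝ) (hKeven : ∀ t, K (-t) = K t)
    (a₀ a₂ c α : ℝ) (hα : 2 < α)
    (hK : (fun t : ℝ => K t - (a₀ + a₂ * t ^ 2 + c * |t| ^ α)) =o[𝓝 (0 : ℝ)]
      fun t : ℝ => t ^ 2)
    (lam : ℝ) (hlam : 0 < lam) :
    Tendsto
      (fun n : ℕ => ∑ i : Fin (n + 1), ∑ j : Fin (n + 1),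
        (expCovMatrix n lam)⁻¹ i j * K (|((i : ℕ) : ℝ) / n - ((j : ℕ) : ℝ) / n|))
      atTop (𝓝 (a₀ * (1 + lam / 2) - a₂ / lam)) := by
  have hK0 : K 0 = a₀ := K_zero_eq K a₀ a₂ c α hα hK
  set R : ℕ → ℝ := fun n => Real.exp (-lam / n) with hR
  have hRlim : Tendsto R atTop (𝓝 1) := by
    have h0 : Tendsto (fun n : ℕ => -lam / (n:ℝ)) atTop (𝓝 0) :=
      tendsto_const_div_atTop_nhds_zero_nat (-lam)
    have := (Real.continuous_exp.tendsto 0).comp h0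
    simpa [hR, Function.comp_def] using this
  have hU : Tendsto (fun n : ℕ => (n:ℝ) * (1 - R n)) atTop (𝓝 lam) :=
    tendsto_n_one_sub_exp lam
  have hV : Tendsto (fun n : ℕ => (n:ℝ) * (1 - (R n)^2)) atTop (𝓝 (2*lam)) := by
    have h := tendsto_n_one_sub_exp (2*lam)
    apply h.congr
    intro n
    have : Real.exp (-lam/(n:ℕ)) ^ 2 = Real.exp (-(2*lam)/n) := by
      rw [← Real.exp_nat_mul]; congr 1; push_cast; ring
    rw [hR]; simp only [this]
  have hW : Tendsto (fun n : ℕ => (n:ℝ)^2 * (K (1/n) - a₀)) atTop (𝓝 a₂) :=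
    W_lim K a₀ a₂ c α hα hK
  -- limit of the model expression
  have h1R : Tendsto (fun n : ℕ => 1 + R n) atTop (𝓝 2) := by
    have := tendsto_const_nhds (x := (1:ℝ)) (f := atTop (α := ℕ)) |>.add hRlim
    norm_num at this; exact this
  have hquot := hU.div h1R (by norm_num)
  have hterm1 : Tendsto (fun n : ℕ => a₀ * (1 + ((n:ℝ)*(1 - R n))/(1 + R n)))
      atTop (𝓝 (a₀ * (1 + lam/2))) :=
    tendsto_const_nhds.mul (tendsto_const_nhds.add hquot)
  have hnum : Tendsto (fun n : ℕ => 2 * R n * ((n:ℝ)^2*(K (1/n) - a₀)))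
      atTop (𝓝 (2 * 1 * a₂)) := by
    exact ((tendsto_const_nhds (x := (2:ℝ))).mul hRlim).mul hW
  have hterm2 : Tendsto (fun n : ℕ => 2 * R n * ((n:ℝ)^2*(K (1/n) - a₀)) / ((n:ℝ)*(1-(R n)^2)))
      atTop (𝓝 (2 * 1 * a₂ / (2*lam))) :=
    hnum.div hV (by positivity)
  have hψ := hterm1.sub hterm2
  have hval : a₀ * (1 + lam/2) - 2 * 1 * a₂ / (2*lam) = a₀ * (1 + lam/2) - a₂/lam := by
    field_simp
  rw [hval] at hψ
  apply hψ.congr'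
  filter_upwards [eventually_ge_atTop 1] with n hn
  have hn' : (0:ℝ) < n := by exact_mod_cast hn
  have hRpos : 0 < R n := Real.exp_pos _
  have hRlt : R n < 1 := by
    rw [hR, Real.exp_lt_one_iff]
    exact div_neg_of_neg_of_pos (by linarith) hn'
  have h1 : 1 - R n ≠ 0 := ne_of_gt (by linarith)
  have h2 : 1 + R n ≠ 0 := ne_of_gt (by linarith)
  have h3 : 1 - (R n)^2 ≠ 0 := ne_of_gt (by nlinarith)
  rw [S_eq n hn lam hlam K, hK0]
  show a₀ * (1 + ((n:ℝ)*(1 - R n))/(1 + R n))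
      - 2 * R n * ((n:ℝ)^2*(K (1/n) - a₀)) / ((n:ℝ)*(1-(R n)^2))
    = 2 * ((a₀ - R n * K (1/n)) / (1 - (R n)^2))
        + ((n:ℝ) - 1) * (((1 + (R n)^2) * a₀ - 2 * R n * K (1/n)) / (1 - (R n)^2))
  field_simp
  ring
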